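/- Let X be a proper geodesic metric space with base point o, let G be a countable group acting freely on X by isometries, let μ be a G-invariant Borel measure on X that is finite and positive on open balls, and let M₀ ⊆ X be a Borel fundamental domain for the action with B(o, d) ⊆ M₀ ⊆ B(o, D) for some 0 < d < D. Then the limit v := lim_{R→∞} (1/R) log μ(B(o, R)) exists, is finite, and equals lim_{R→∞} (1/R) log π(R), where π(R) = #{g ∈ G : d(o, g·o) ≤ R}; in particular the latter limit also exists. -/

import Mathlib

open Filter Metric Topology MeasureTheory ENNReal Pointwise

/-- The volume entropy `v = lim_{R→∞} (1/R) log μ(B(o,R))` exists, is finite, and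
equals the critical exponent `lim_{R→∞} (1/R) log π(R)` of the orbit counting
function `π(R) = #{g : d(o, g·o) ≤ R}` of a cocompact free isometric action
preserving `μ`. -/
theorem volume_entropy_eq_orbit_growth {X : Type*} [MetricSpace X] [ProperSpace X]
    [MeasurableSpace X] [BorelSpace X] (o : X)
    (hgeo : ∀ p q : X, ∃ γ : ℝ → X, γ 0 = p ∧ γ (dist p q) = q ∧
      ∀ s ∈ Set.Icc 0 (dist p q), ∀ t ∈ Set.Icc 0 (dist p q),
        dist (γ s) (γ t) = |s - t|)
    {G : Type*} [Group G] [Countable G] [MulAction G X]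
    (hiso : ∀ g : G, Isometry (fun x : X => g • x))
    (hfree : ∀ g : G, g ≠ 1 → ∀ x : X, g • x ≠ x)
    (μ : Measure X)
    (hinv : ∀ g : G, Measure.map (fun x : X => g • x) μ = μ)
    (hballs : ∀ (x : X) (r : ℝ), 0 < r → 0 < μ (Metric.ball x r) ∧ μ (Metric.ball x r) < ⊤)
    (M₀ : Set X) (hM₀ : MeasurableSet M₀)
    (hdisj : ∀ g h : G, g ≠ h → Disjoint (g • M₀) (h • M₀))
    (hcover : ⋃ g : G, g • M₀ = Set.univ)
    (d D : ℝ) (hd : 0 < d) (hdD : d < D)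
    (hball : Metric.ball o d ⊆ M₀) (hM₀D : M₀ ⊆ Metric.ball o D) :
    ∃ v : ℝ,
      Tendsto (fun R : ℝ => (1 / R) * Real.log (μ (Metric.ball o R)).toReal) atTop (𝓝 v) ∧
      Tendsto (fun R : ℝ => (1 / R) * Real.log ({g : G | dist o (g • o) ≤ R}.ncard)) atTop
        (𝓝 v) := by
  classical
  haveI : IsIsometricSMul G X := ⟨fun g => hiso g⟩
  have hD : (0:ℝ) < D := hd.trans hdD
  set S : ℝ → Set G := fun R => {g : G | dist o (g • o) ≤ R} with hS
  -- measure invariance for translated sets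
  have hmeas_smul : ∀ (g : G) (s : Set X), MeasurableSet s → μ (g • s) = μ s := by
    intro g s hs
    have hcont : Measurable (fun x : X => g • x) := (hiso g).continuous.measurable
    have hsm : MeasurableSet (g • s) := by
      have : g • s = (fun x : X => g⁻¹ • x) ⁻¹' s := by
        ext x
        simp [Set.mem_smul_set_iff_inv_smul_mem]
      rw [this]
      exact (hiso g⁻¹).continuous.measurable hs
    have h1 : μ (g • s) = (Measure.map (fun x : X => g • x) μ) (g • s) := by rw [hinv g]
    rw [h1, Measure.map_apply hcont hsm]
    congr 1
    ext x
    simp [Set.mem_smul_set_iff_inv_smul_mem]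
  have hballinv : ∀ (g : G) (r : ℝ), μ (ball (g • o) r) = μ (ball o r) := by
    intro g r
    rw [← Metric.smul_ball]
    exact hmeas_smul g _ measurableSet_ball
  -- disjointness of the small balls around orbit points
  have hdisjballs : ∀ g h : G, g ≠ h → Disjoint (ball (g • o) d) (ball (h • o) d) := by
    intro g h hgh
    refine (hdisj g h hgh).mono ?_ ?_
    · rw [← Metric.smul_ball]; exact Set.smul_set_mono hball
    · rw [← Metric.smul_ball]; exact Set.smul_set_mono hball
  -- finiteness of orbit counting sets
  have hfin : ∀ R : ℝ, (S R).Finite := by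
    intro R
    by_contra hinf
    replace hinf : (S R).Infinite := hinf
    haveI : Infinite ↥(S R) := hinf.to_subtype
    obtain ⟨g₀, hg₀⟩ := hinf.nonempty
    have hR0 : (0:ℝ) ≤ R := le_trans dist_nonneg hg₀
    have hcd : 0 < μ (ball o d) := (hballs o d hd).1
    have hkey : μ (⋃ g : ↥(S R), ball ((g : G) • o) d)
        = ∑' g : ↥(S R), μ (ball ((g : G) • o) d) := by
      refine measure_iUnion ?_ fun g => measurableSet_ball
      intro a b hab
      exact hdisjballs _ _ (fun h => hab (Subtype.ext h))
    have hsub : (⋃ g : ↥(S R), ball ((g : G) • o) d) ⊆ ball o (R + d) := by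
      rintro x hx
      obtain ⟨g, hg⟩ := Set.mem_iUnion.1 hx
      have h1 : dist x ((g : G) • o) < d := mem_ball.1 hg
      have h2 : dist o ((g : G) • o) ≤ R := g.2
      have : dist x o < R + d := by
        calc dist x o ≤ dist x ((g : G) • o) + dist ((g : G) • o) o := dist_triangle _ _ _
          _ < d + R := by rw [dist_comm ((g : G) • o) o]; linarith
          _ = R + d := by ring
      exact mem_ball.2 this
    have htop : μ (⋃ g : ↥(S R), ball ((g : G) • o) d) = ⊤ := by
      rw [hkey]
      have : ∀ g : ↥(S R), μ (ball ((g : G) • o) d) = μ (ball o d) := fun g => hballinv _ _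
      rw [tsum_congr this]
      exact ENNReal.tsum_const_eq_top_of_ne_zero hcd.ne'
    have : μ (ball o (R + d)) = ⊤ :=
      top_le_iff.1 (htop ▸ measure_mono hsub)
    exact ((hballs o (R + d) (by linarith)).2.ne) this
  -- monotonicity of the counting function
  have hmono : ∀ {R₁ R₂ : ℝ}, R₁ ≤ R₂ → (S R₁).ncard ≤ (S R₂).ncard := by
    intro R₁ R₂ h
    exact Set.ncard_le_ncard (fun g hg => le_trans hg h) (hfin R₂)
  have honemem : ∀ R : ℝ, 0 ≤ R → (1 : G) ∈ S R := by
    intro R hR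
    show dist o ((1 : G) • o) ≤ R
    rw [one_smul, dist_self]; exact hR
  have hone : ∀ R : ℝ, 0 ≤ R → 1 ≤ (S R).ncard := by
    intro R hR
    exact (Set.ncard_pos (hfin R)).2 ⟨1, honemem R hR⟩
  have hcastpos : ∀ R : ℝ, 0 ≤ R → (0:ℝ) < ((S R).ncard : ℝ) := by
    intro R hR
    exact_mod_cast Nat.lt_of_lt_of_le Nat.zero_lt_one (hone R hR)
  -- packing inequality
  have hpack : ∀ R : ℝ, 0 ≤ R →
      ((S R).ncard : ℝ≥0∞) * μ (ball o d) ≤ μ (ball o (R + d)) := by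
    intro R hR
    set F := (hfin R).toFinset with hF
    have hdisjF : (↑F : Set G).PairwiseDisjoint (fun g => ball (g • o) d) := by
      intro a _ b _ hab
      exact hdisjballs a b hab
    have hmeasu : μ (⋃ g ∈ F, ball (g • o) d) = ∑ g ∈ F, μ (ball (g • o) d) :=
      measure_biUnion_finset hdisjF fun g _ => measurableSet_ball
    have hsubU : (⋃ g ∈ F, ball (g • o) d) ⊆ ball o (R + d) := by
      rintro x hx
      obtain ⟨g, hgF, hg⟩ := Set.mem_iUnion₂.1 hx
      have h2 : dist o (g • o) ≤ R := ((hfin R).mem_toFinset.1 hgF)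
      have : dist x o < R + d := by
        calc dist x o ≤ dist x (g • o) + dist (g • o) o := dist_triangle _ _ _
          _ < d + R := by rw [dist_comm (g • o) o]; exact add_lt_add_of_lt_of_le (mem_ball.1 hg) h2
          _ = R + d := by ring
      exact mem_ball.2 this
    have hsum : ∑ g ∈ F, μ (ball (g • o) d) = ((S R).ncard : ℝ≥0∞) * μ (ball o d) := by
      have h' : ∀ g ∈ F, μ (ball (g • o) d) = μ (ball o d) := fun g _ => hballinv _ _
      have hcard : F.card = (S R).ncard := (Set.ncard_eq_toFinset_card (S R) (hfin R)).symm
      rw [Finset.sum_congr rfl h', Finset.sum_const, nsmul_eq_mul, hcard]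
    calc ((S R).ncard : ℝ≥0∞) * μ (ball o d) = ∑ g ∈ F, μ (ball (g • o) d) := hsum.symm
      _ = μ (⋃ g ∈ F, ball (g • o) d) := hmeasu.symm
      _ ≤ μ (ball o (R + d)) := measure_mono hsubU
  -- covering inequality
  have hcov : ∀ R : ℝ, μ (ball o R) ≤ ((S (R + D)).ncard : ℝ≥0∞) * μ (ball o D) := by
    intro R
    set F := (hfin (R + D)).toFinset with hF
    have hsubU : ball o R ⊆ ⋃ g ∈ F, g • M₀ := by
      intro x hx
      have : x ∈ ⋃ g : G, g • M₀ := by rw [hcover]; trivial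
      obtain ⟨g, hg⟩ := Set.mem_iUnion.1 this
      have hmem : g⁻¹ • x ∈ M₀ := Set.mem_smul_set_iff_inv_smul_mem.1 hg
      have hdx : dist x (g • o) < D := by
        have h1 : dist (g⁻¹ • x) o < D := mem_ball.1 (hM₀D hmem)
        have h2 : dist (g⁻¹ • x) o = dist x (g • o) := by
          rw [← dist_smul g (g⁻¹ • x) o, smul_inv_smul]
        linarith [h2 ▸ h1]
      have hgS : g ∈ S (R + D) := by
        show dist o (g • o) ≤ R + D
        calc dist o (g • o) ≤ dist o x + dist x (g • o) := dist_triangle _ _ _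
          _ ≤ R + D := by
            have := mem_ball.1 hx
            rw [dist_comm x o] at this
            linarith
      exact Set.mem_iUnion₂.2 ⟨g, (hfin (R + D)).mem_toFinset.2 hgS, hg⟩
    calc μ (ball o R) ≤ μ (⋃ g ∈ F, g • M₀) := measure_mono hsubU
      _ ≤ ∑ g ∈ F, μ (g • M₀) := measure_biUnion_finset_le F _
      _ = ∑ g ∈ F, μ M₀ := Finset.sum_congr rfl fun g _ => hmeas_smul g M₀ hM₀
      _ = (F.card : ℝ≥0∞) * μ M₀ := by rw [Finset.sum_const, nsmul_eq_mul]
      _ ≤ ((S (R + D)).ncard : ℝ≥0∞) * μ (ball o D) := by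
          apply mul_le_mul'
          · rw [Set.ncard_eq_toFinset_card (S (R + D)) (hfin (R + D))]
          · exact measure_mono hM₀D
  have hfinball : ∀ R : ℝ, μ (ball o R) < ⊤ := by
    intro R
    calc μ (ball o R) ≤ ((S (R + D)).ncard : ℝ≥0∞) * μ (ball o D) := hcov R
      _ < ⊤ := ENNReal.mul_lt_top (ENNReal.natCast_ne_top _).lt_top (hballs o D hD).2
  -- submultiplicativity via geodesics
  have hsubm : ∀ R T : ℝ, 0 ≤ R → 0 ≤ T →
      (S (R + T)).ncard ≤ (S (R + D)).ncard * (S (T + D)).ncard := by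
    intro R T hR hT
    have key : ∀ g ∈ S (R + T), ∃ h : G,
        dist o (h • o) ≤ R + D ∧ dist o ((h⁻¹ * g) • o) ≤ T + D := by
      intro g hg
      obtain ⟨γ, hγ0, hγL, hγd⟩ := hgeo o (g • o)
      set L := dist o (g • o) with hL
      have hL0 : 0 ≤ L := dist_nonneg
      have hLRT : L ≤ R + T := hg
      have hminmem : min R L ∈ Set.Icc 0 L := ⟨le_min hR hL0, min_le_right _ _⟩
      have h0mem : (0:ℝ) ∈ Set.Icc 0 L := ⟨le_refl _, hL0⟩
      have hLmem : L ∈ Set.Icc 0 L := ⟨hL0, le_refl _⟩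
      set m := γ (min R L) with hm
      have h1 : dist o m = min R L := by
        rw [← hγ0]
        rw [hγd 0 h0mem (min R L) hminmem]
        rw [abs_of_nonpos (by simpa using hminmem.1)]
        ring
      have h2 : dist m (g • o) = L - min R L := by
        rw [← hγL, hγd (min R L) hminmem L hLmem]
        rw [abs_of_nonpos (by linarith [hminmem.2])]
        ring
      have hmcov : m ∈ ⋃ h : G, h • M₀ := by rw [hcover]; trivial
      obtain ⟨h, hmh⟩ := Set.mem_iUnion.1 hmcov
      have hdm : dist m (h • o) < D := by
        have h3 : h⁻¹ • m ∈ M₀ := Set.mem_smul_set_iff_inv_smul_mem.1 hmh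
        have h4 : dist (h⁻¹ • m) o < D := mem_ball.1 (hM₀D h3)
        have h5 : dist (h⁻¹ • m) o = dist m (h • o) := by
          rw [← dist_smul h (h⁻¹ • m) o, smul_inv_smul]
        linarith [h5 ▸ h4]
      refine ⟨h, ?_, ?_⟩
      · calc dist o (h • o) ≤ dist o m + dist m (h • o) := dist_triangle _ _ _
          _ ≤ min R L + D := by rw [h1]; linarith
          _ ≤ R + D := by linarith [min_le_left R L]
      · have h6 : dist o ((h⁻¹ * g) • o) = dist (h • o) (g • o) := by
          rw [mul_smul, ← dist_smul h o (h⁻¹ • g • o), smul_inv_smul]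
        rw [h6]
        have h7 : L - min R L ≤ T := by
          rcases min_cases R L with ⟨he, _⟩ | ⟨he, _⟩ <;> rw [he] <;> linarith
        calc dist (h • o) (g • o) ≤ dist (h • o) m + dist m (g • o) := dist_triangle _ _ _
          _ ≤ D + (L - min R L) := by rw [dist_comm (h • o) m, h2]; linarith
          _ ≤ T + D := by linarith
    choose! f hf1 hf2 using key
    set φ : G → G × G := fun g => (f g, (f g)⁻¹ * g) with hφ
    have hmaps : ∀ g ∈ S (R + T), φ g ∈ (S (R + D)) ×ˢ (S (T + D)) := by
      intro g hg
      exact Set.mem_prod.2 ⟨hf1 g hg, hf2 g hg⟩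
    have hinj : Set.InjOn φ (S (R + T)) := by
      intro a ha b hb hab
      have e1 : f a = f b := congrArg Prod.fst hab
      have e2 : (f a)⁻¹ * a = (f b)⁻¹ * b := congrArg Prod.snd hab
      rw [e1] at e2
      exact mul_left_cancel e2
    have hle := Set.ncard_le_ncard_of_injOn φ hmaps hinj ((hfin _).prod (hfin _))
    have hprod : ((S (R + D)) ×ˢ (S (T + D))).ncard
        = (S (R + D)).ncard * (S (T + D)).ncard := by
      rw [← Nat.card_coe_set_eq, ← Nat.card_coe_set_eq, ← Nat.card_coe_set_eq,
        ← Nat.card_prod]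
      exact Nat.card_congr (Equiv.Set.prod _ _)
    rw [hprod] at hle
    exact hle
  -- the subadditive sequence
  set u : ℕ → ℝ := fun n => Real.log ((S (n + 2 * D)).ncard) with hu
  have h2D : (0:ℝ) ≤ 2 * D := by linarith
  have hargpos : ∀ n : ℕ, (0:ℝ) ≤ (n : ℝ) + 2 * D := fun n => by positivity
  have husub : Subadditive u := by
    intro m n
    have h := hsubm ((m : ℝ) + D) ((n : ℝ) + D) (by positivity) (by positivity)
    rw [show ((m:ℝ) + D) + ((n:ℝ) + D) = ((m + n : ℕ) : ℝ) + 2 * D by push_cast; ring,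
      show (m:ℝ) + D + D = (m:ℝ) + 2 * D by ring,
      show (n:ℝ) + D + D = (n:ℝ) + 2 * D by ring] at h
    have hcast : ((S (((m + n : ℕ) : ℝ) + 2 * D)).ncard : ℝ)
        ≤ ((S ((m:ℝ) + 2 * D)).ncard : ℝ) * ((S ((n:ℝ) + 2 * D)).ncard : ℝ) := by
      exact_mod_cast h
    calc u (m + n) ≤ Real.log (((S ((m:ℝ) + 2 * D)).ncard : ℝ) * ((S ((n:ℝ) + 2 * D)).ncard : ℝ)) :=
          Real.log_le_log (hcastpos _ (hargpos (m + n))) hcast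
      _ = u m + u n := Real.log_mul (hcastpos _ (hargpos m)).ne' (hcastpos _ (hargpos n)).ne'
  have hunonneg : ∀ n : ℕ, 0 ≤ u n := by
    intro n
    apply Real.log_nonneg
    exact_mod_cast hone _ (hargpos n)
  have hbdd : BddBelow (Set.range fun n : ℕ => u n / n) := by
    refine ⟨0, ?_⟩
    rintro x ⟨n, rfl⟩
    positivity
  set v : ℝ := husub.lim with hv
  have hlim : Tendsto (fun n : ℕ => u n / n) atTop (𝓝 v) := husub.tendsto_lim hbdd
  -- real-variable limit of the counting function
  set lN : ℝ → ℝ := fun R => Real.log ((S R).ncard) with hlN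
  have hsub2D : Tendsto (fun R : ℝ => R - 2 * D) atTop atTop := by
    simpa [sub_eq_add_neg] using tendsto_atTop_add_const_right atTop (-(2 * D)) tendsto_id
  have hNlim : Tendsto (fun R : ℝ => lN R / R) atTop (𝓝 v) := by
    have hA : Tendsto (fun R : ℝ => u ⌊R - 2 * D⌋₊ / (⌊R - 2 * D⌋₊ : ℝ)) atTop (𝓝 v) :=
      hlim.comp (tendsto_nat_floor_atTop.comp hsub2D)
    have hB : Tendsto (fun R : ℝ => (⌊R - 2 * D⌋₊ : ℝ) / R) atTop (𝓝 1) := by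
      have h1 : Tendsto (fun R : ℝ => (⌊R - 2 * D⌋₊ : ℝ) / (R - 2 * D)) atTop (𝓝 1) :=
        tendsto_nat_floor_div_atTop.comp hsub2D
      have h2 : Tendsto (fun R : ℝ => (R - 2 * D) / R) atTop (𝓝 1) := by
        have h3 : Tendsto (fun R : ℝ => 1 - 2 * D / R) atTop (𝓝 1) := by
          simpa using tendsto_const_nhds.sub (tendsto_const_nhds.div_atTop (tendsto_id (α := ℝ)))
        refine h3.congr' ?_
        filter_upwards [eventually_ne_atTop (0 : ℝ)] with R hR
        field_simp
      have h4 := h1.mul h2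
      rw [mul_one] at h4
      refine h4.congr' ?_
      filter_upwards [eventually_ne_atTop (0 : ℝ), eventually_gt_atTop (2 * D)] with R hR hR2
      have hR2' : R - 2 * D ≠ 0 := by linarith
      field_simp
    have hlo : Tendsto (fun R : ℝ =>
        (u ⌊R - 2 * D⌋₊ / (⌊R - 2 * D⌋₊ : ℝ)) * ((⌊R - 2 * D⌋₊ : ℝ) / R)) atTop (𝓝 v) := by
      simpa using hA.mul hB
    have hC : Tendsto (fun R : ℝ => u ⌈R⌉₊ / (⌈R⌉₊ : ℝ)) atTop (𝓝 v) :=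
      hlim.comp tendsto_nat_ceil_atTop
    have hup : Tendsto (fun R : ℝ =>
        (u ⌈R⌉₊ / (⌈R⌉₊ : ℝ)) * ((⌈R⌉₊ : ℝ) / R)) atTop (𝓝 v) := by
      simpa using hC.mul tendsto_nat_ceil_div_atTop
    refine tendsto_of_tendsto_of_tendsto_of_le_of_le' hlo hup ?_ ?_
    · filter_upwards [eventually_ge_atTop (2 * D + 1)] with R hR
      have hRpos : (0:ℝ) < R := by linarith
      have hn1 : 1 ≤ ⌊R - 2 * D⌋₊ := Nat.le_floor (by push_cast; linarith)
      have hnpos : (0:ℝ) < (⌊R - 2 * D⌋₊ : ℝ) := by exact_mod_cast hn1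
      have hnle : ((⌊R - 2 * D⌋₊ : ℕ) : ℝ) ≤ R - 2 * D := Nat.floor_le (by linarith)
      have harg : ((⌊R - 2 * D⌋₊ : ℕ) : ℝ) + 2 * D ≤ R := by linarith
      have hlog : u ⌊R - 2 * D⌋₊ ≤ lN R := by
        apply Real.log_le_log (hcastpos _ (hargpos _))
        exact_mod_cast hmono harg
      have heq : (u ⌊R - 2 * D⌋₊ / (⌊R - 2 * D⌋₊ : ℝ)) * ((⌊R - 2 * D⌋₊ : ℝ) / R)
          = u ⌊R - 2 * D⌋₊ / R := by
        field_simp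
      rw [heq]
      exact div_le_div_of_nonneg_right hlog hRpos.le
    · filter_upwards [eventually_ge_atTop (1 : ℝ)] with R hR
      have hRpos : (0:ℝ) < R := by linarith
      have hn1 : 0 < ⌈R⌉₊ := Nat.ceil_pos.2 hRpos
      have hnpos : (0:ℝ) < (⌈R⌉₊ : ℝ) := by exact_mod_cast hn1
      have hle : R ≤ ((⌈R⌉₊ : ℕ) : ℝ) + 2 * D := le_trans (Nat.le_ceil R) (by linarith)
      have hlog : lN R ≤ u ⌈R⌉₊ := by
        apply Real.log_le_log (hcastpos _ (by linarith))
        exact_mod_cast hmono hle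
      have heq : (u ⌈R⌉₊ / (⌈R⌉₊ : ℝ)) * ((⌈R⌉₊ : ℝ) / R) = u ⌈R⌉₊ / R := by
        field_simp
      rw [heq]
      exact div_le_div_of_nonneg_right hlog hRpos.le
  -- measure part
  have hshift : ∀ a : ℝ, Tendsto (fun R : ℝ => lN (R + a) / (R + a)) atTop (𝓝 v) :=
    fun a => hNlim.comp (tendsto_atTop_add_const_right atTop a tendsto_id)
  have hcomb : ∀ a c : ℝ, Tendsto (fun R : ℝ => (lN (R + a) + c) / R) atTop (𝓝 v) := by
    intro a c
    have hratio : Tendsto (fun R : ℝ => (R + a) / R) atTop (𝓝 1) := by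
      have h3 : Tendsto (fun R : ℝ => 1 + a / R) atTop (𝓝 1) := by
        simpa using tendsto_const_nhds.add (tendsto_const_nhds.div_atTop (tendsto_id (α := ℝ)))
      refine h3.congr' ?_
      filter_upwards [eventually_ne_atTop (0 : ℝ)] with R hR
      field_simp
    have h1 : Tendsto (fun R : ℝ => (lN (R + a) / (R + a)) * ((R + a) / R) + c / R)
        atTop (𝓝 (v * 1 + 0)) :=
      ((hshift a).mul hratio).add (tendsto_const_nhds.div_atTop (tendsto_id (α := ℝ)))
    rw [mul_one, add_zero] at h1
    refine h1.congr' ?_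
    filter_upwards [eventually_ne_atTop (0 : ℝ), eventually_gt_atTop (-a)] with R hR hRa
    have hRa' : R + a ≠ 0 := by linarith
    field_simp
  set cd : ℝ := (μ (ball o d)).toReal with hcd
  set CD : ℝ := (μ (ball o D)).toReal with hCD
  have hcdpos : 0 < cd := ENNReal.toReal_pos (hballs o d hd).1.ne' (hballs o d hd).2.ne
  have hCDpos : 0 < CD := ENNReal.toReal_pos (hballs o D hD).1.ne' (hballs o D hD).2.ne
  have hμlim : Tendsto (fun R : ℝ => Real.log (μ (ball o R)).toReal / R) atTop (𝓝 v) := by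
    refine tendsto_of_tendsto_of_tendsto_of_le_of_le' (hcomb (-d) (Real.log cd))
      (hcomb D (Real.log CD)) ?_ ?_
    · filter_upwards [eventually_ge_atTop (d + 1)] with R hR
      have hRd : (0:ℝ) ≤ R - d := by linarith
      have hRpos : (0:ℝ) < R := by linarith
      have hp := hpack (R - d) hRd
      rw [sub_add_cancel] at hp
      have htR : ((S (R - d)).ncard : ℝ) * cd ≤ (μ (ball o R)).toReal := by
        have h' := ENNReal.toReal_mono (hfinball R).ne hp
        rwa [ENNReal.toReal_mul, ENNReal.toReal_natCast] at h'
      have hlog : lN (R - d) + Real.log cd ≤ Real.log (μ (ball o R)).toReal := by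
        rw [← Real.log_mul (hcastpos _ hRd).ne' hcdpos.ne']
        exact Real.log_le_log (mul_pos (hcastpos _ hRd) hcdpos) htR
      have heq : R + -d = R - d := by ring
      rw [heq]
      exact div_le_div_of_nonneg_right hlog hRpos.le
    · filter_upwards [eventually_ge_atTop (1 : ℝ)] with R hR
      have hRpos : (0:ℝ) < R := by linarith
      have hc := hcov R
      have htR : (μ (ball o R)).toReal ≤ ((S (R + D)).ncard : ℝ) * CD := by
        have hne : ((S (R + D)).ncard : ℝ≥0∞) * μ (ball o D) ≠ ⊤ :=
          ENNReal.mul_ne_top (ENNReal.natCast_ne_top _) (hballs o D hD).2.ne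
        have h' := ENNReal.toReal_mono hne hc
        rwa [ENNReal.toReal_mul, ENNReal.toReal_natCast] at h'
      have hμpos : 0 < (μ (ball o R)).toReal :=
        ENNReal.toReal_pos (hballs o R hRpos).1.ne' (hfinball R).ne
      have hlog : Real.log (μ (ball o R)).toReal ≤ lN (R + D) + Real.log CD := by
        rw [← Real.log_mul (hcastpos _ (by linarith)).ne' hCDpos.ne']
        exact Real.log_le_log hμpos htR
      exact div_le_div_of_nonneg_right hlog hRpos.le
  refine ⟨v, ?_, ?_⟩
  · have : (fun R : ℝ => (1 / R) * Real.log (μ (ball o R)).toReal)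
        = fun R : ℝ => Real.log (μ (ball o R)).toReal / R := by
      funext R; rw [one_div_mul_eq_div]
    rw [this]
    exact hμlim
  · have : (fun R : ℝ => (1 / R) * Real.log ({g : G | dist o (g • o) ≤ R}.ncard))
        = fun R : ℝ => lN R / R := by
      funext R; rw [one_div_mul_eq_div]
    rw [this]
    exact hNlim
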